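/- Let A, B ∈ ℝ^{n×n}. Then A and B are permutationally similar if and only if: (a) the diagonal entries of A and B agree as multisets and the off-diagonal entries agree as multisets, and (b) for some (equivalently, any) t ∈ ℝ with t ≠ a_{ij} − a_{kk} for all i ≠ j and all k, there exists Z ∈ Ψ_{n,n} with Z·vec(A + tI) = vec(B + tI). -/

import Mathlib

open Matrix Kronecker Finset

/-- `Ψ_{m,n}`: the convex hull of Kronecker products of permutation matrices. -/
def Psi (m n : ℕ) : Set (Matrix (Fin m × Fin n) (Fin m × Fin n) ℝ) :=
  convexHull ℝ {C | ∃ σ : Equiv.Perm (Fin m), ∃ τ : Equiv.Perm (Fin n),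
    C = (σ.permMatrix ℝ) ⊗ₖ (τ.permMatrix ℝ)}

/-- `vec`: stacking the columns of a square matrix. -/
def vec (n : ℕ) (M : Matrix (Fin n) (Fin n) ℝ) : Fin n × Fin n → ℝ :=
  fun p => M p.2 p.1

lemma conj_apply {n : ℕ} (σ : Equiv.Perm (Fin n)) (A : Matrix (Fin n) (Fin n) ℝ) (i j : Fin n) :
    (σ.permMatrix ℝ * A * (σ.permMatrix ℝ)ᵀ) i j = A (σ i) (σ j) := by
  simp [Equiv.Perm.permMatrix, Matrix.mul_apply, PEquiv.toMatrix_apply, Equiv.toPEquiv,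
    Finset.sum_mul, ite_mul, mul_ite]

lemma kron_mulVec {n : ℕ} (σ τ : Equiv.Perm (Fin n)) (M : Matrix (Fin n) (Fin n) ℝ) :
    ((σ.permMatrix ℝ) ⊗ₖ (τ.permMatrix ℝ)).mulVec (vec n M) =
      vec n (Matrix.of fun a b => M (τ a) (σ b)) := by
  funext p
  obtain ⟨i, j⟩ := p
  simp [Matrix.mulVec, dotProduct, _root_.vec, kroneckerMap_apply, Equiv.Perm.permMatrix,
    PEquiv.toMatrix_apply, Equiv.toPEquiv, Fintype.sum_prod_type, ite_mul, mul_ite]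

lemma map_comp_perm {α β : Type*} [Fintype α] [DecidableEq α] (e : Equiv.Perm α) (f : α → β) :
    (Finset.univ.val.map fun a => f (e a)) = Finset.univ.val.map f := by
  have h : (Finset.univ : Finset α) = Finset.univ.map e.toEmbedding :=
    (Finset.map_univ_equiv e).symm
  conv_rhs => rw [h]
  rw [Finset.map_val, Multiset.map_map]
  rfl

lemma filter_map_comp_perm {α β : Type*} [Fintype α] [DecidableEq α] (e : Equiv.Perm α)
    (S : α → Prop) [DecidablePred S] (hS : ∀ a, S (e a) ↔ S a) (f : α → β) :
    ((Finset.univ.filter S).val.map fun a => f (e a)) = (Finset.univ.filter S).val.map f := by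
  have h : Finset.univ.filter S = (Finset.univ.filter S).map e.toEmbedding := by
    ext a
    simp only [Finset.mem_map, Finset.mem_filter, Finset.mem_univ, true_and,
      Equiv.coe_toEmbedding]
    constructor
    · intro ha
      exact ⟨e.symm a, by rw [← hS, Equiv.apply_symm_apply]; exact ha, e.apply_symm_apply a⟩
    · rintro ⟨b, hb, rfl⟩
      exact (hS b).mpr hb
  conv_rhs => rw [h]
  rw [Finset.map_val, Multiset.map_map]
  rfl

/-- `A` and `B` are permutationally similar iff their diagonal and off-diagonal entries
agree as multisets and, for every admissible `t`, some `Z ∈ Ψ_{n,n}` satisfies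
`Z · vec(A + tI) = vec(B + tI)`. -/
theorem perm_similar_iff_lp (n : ℕ) (A B : Matrix (Fin n) (Fin n) ℝ) :
    (∃ P : Equiv.Perm (Fin n), B = P.permMatrix ℝ * A * (P.permMatrix ℝ)ᵀ) ↔
    (((Finset.univ.val.map fun i : Fin n => A i i) =
        (Finset.univ.val.map fun i : Fin n => B i i)) ∧
     (((Finset.univ.filter fun p : Fin n × Fin n => p.1 ≠ p.2).val.map
          fun p => A p.1 p.2) =
        ((Finset.univ.filter fun p : Fin n × Fin n => p.1 ≠ p.2).val.map
          fun p => B p.1 p.2)) ∧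
     ∀ t : ℝ, (∀ i j k : Fin n, i ≠ j → t ≠ A i j - A k k) →
       ∃ Z ∈ Psi n n, Z.mulVec (vec n (A + t • 1)) = vec n (B + t • 1)) := by
  constructor
  · rintro ⟨σ, rfl⟩
    have hB : ∀ i j, (σ.permMatrix ℝ * A * (σ.permMatrix ℝ)ᵀ) i j = A (σ i) (σ j) :=
      conj_apply σ A
    refine ⟨?_, ?_, ?_⟩
    · have h1 : (Finset.univ.val.map fun i : Fin n =>
          (σ.permMatrix ℝ * A * (σ.permMatrix ℝ)ᵀ) i i) =
          Finset.univ.val.map fun i : Fin n => A (σ i) (σ i) :=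
        Multiset.map_congr rfl fun i _ => hB i i
      rw [h1, map_comp_perm σ (fun i => A i i)]
    · have h1 : ((Finset.univ.filter fun p : Fin n × Fin n => p.1 ≠ p.2).val.map
          fun p => (σ.permMatrix ℝ * A * (σ.permMatrix ℝ)ᵀ) p.1 p.2) =
          (Finset.univ.filter fun p : Fin n × Fin n => p.1 ≠ p.2).val.map
          fun p => A (σ p.1) (σ p.2) :=
        Multiset.map_congr rfl fun p _ => hB p.1 p.2
      rw [h1]
      exact (filter_map_comp_perm (Equiv.prodCongr σ σ) (fun p => p.1 ≠ p.2)
        (fun p => by simp [σ.injective.ne_iff]) (fun p => A p.1 p.2)).symm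
    · intro t _
      refine ⟨(σ.permMatrix ℝ) ⊗ₖ (σ.permMatrix ℝ),
        subset_convexHull ℝ _ ⟨σ, σ, rfl⟩, ?_⟩
      have hM : (Matrix.of fun a b => (A + t • (1 : Matrix (Fin n) (Fin n) ℝ)) (σ a) (σ b)) =
          (σ.permMatrix ℝ * A * (σ.permMatrix ℝ)ᵀ) + t • 1 := by
        ext a b
        simp only [Matrix.of_apply, Matrix.add_apply, Matrix.smul_apply, Matrix.one_apply,
          hB a b, smul_eq_mul, Equiv.apply_eq_iff_eq]
      rw [kron_mulVec, hM]
  · rintro ⟨h1, h2, h3⟩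
    -- choose an admissible t
    obtain ⟨t, ht⟩ := Infinite.exists_notMem_finset
      (Finset.image (fun q : (Fin n × Fin n) × Fin n => A q.1.1 q.1.2 - A q.2 q.2) Finset.univ)
    have htadm : ∀ i j k : Fin n, i ≠ j → t ≠ A i j - A k k := by
      intro i j k _ h
      exact ht (h ▸ Finset.mem_image_of_mem _ (Finset.mem_univ ((i, j), k)))
    obtain ⟨Z, hZ, hZeq⟩ := h3 t htadm
    set A' : Matrix (Fin n) (Fin n) ℝ := A + t • 1 with hA'def
    set B' : Matrix (Fin n) (Fin n) ℝ := B + t • 1 with hB'def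
    have hA' : ∀ i j, A' i j = A i j + (if i = j then t else 0) := by
      intro i j
      simp [hA'def, Matrix.one_apply, mul_ite]
    have hB' : ∀ i j, B' i j = B i j + (if i = j then t else 0) := by
      intro i j
      simp [hB'def, Matrix.one_apply, mul_ite]
    set x := vec n A' with hx
    set y := vec n B' with hy
    rw [Psi, _root_.convexHull_eq] at hZ
    obtain ⟨ι, s, w, z, hw0, hw1, hzs, hcm⟩ := hZ
    rw [Finset.centerMass_eq_of_sum_1 _ _ hw1] at hcm
    set v : ι → Fin n × Fin n → ℝ := fun i => (z i).mulVec x with hv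
    have hsum : ∀ p, (∑ i ∈ s, w i * v i p) = y p := by
      intro p
      have h0 : Z.mulVec x p = y p := congrFun hZeq p
      rw [← hcm] at h0
      rw [← h0]
      simp only [Matrix.mulVec, dotProduct, Finset.sum_apply, Matrix.sum_apply,
        Matrix.smul_apply, smul_eq_mul, Finset.sum_mul, hv]
      rw [Finset.sum_comm]
      exact Finset.sum_congr rfl fun i _ => by rw [Finset.mul_sum]; ring_nf
    -- sums of squares
    have hdiagsum : ∀ f : ℝ → ℝ, (∑ i : Fin n, f (A i i)) = ∑ i : Fin n, f (B i i) := by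
      intro f
      have := congrArg (fun m => (Multiset.map f m).sum) h1
      simpa [Multiset.map_map, Finset.sum, Function.comp_def] using this
    have hoffsum : ∀ f : ℝ → ℝ,
        (∑ p ∈ Finset.univ.filter fun p : Fin n × Fin n => p.1 ≠ p.2, f (A p.1 p.2)) =
        ∑ p ∈ Finset.univ.filter fun p : Fin n × Fin n => p.1 ≠ p.2, f (B p.1 p.2) := by
      intro f
      have := congrArg (fun m => (Multiset.map f m).sum) h2
      simpa [Multiset.map_map, Finset.sum, Function.comp] using this
    -- split ∑ over all pairs into diag + offdiag
    have hsplit : ∀ M : Matrix (Fin n) (Fin n) ℝ,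
        (∑ p : Fin n × Fin n, (M p.1 p.2) ^ 2) =
        (∑ p ∈ Finset.univ.filter fun p : Fin n × Fin n => p.1 ≠ p.2, (M p.1 p.2) ^ 2) +
        ∑ i : Fin n, (M i i) ^ 2 := by
      intro M
      rw [← Finset.sum_filter_add_sum_filter_not Finset.univ
        (fun p : Fin n × Fin n => p.1 ≠ p.2) (fun p => (M p.1 p.2) ^ 2)]
      congr 1
      refine Finset.sum_nbij' (fun p => p.1) (fun i => (i, i)) ?_ ?_ ?_ ?_ ?_
      · intro p _
        exact Finset.mem_univ _
      · intro i _
        simp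
      · intro p hp
        simp only [Finset.mem_filter, not_not] at hp
        exact Prod.ext rfl hp.2
      · intro i _
        rfl
      · intro p hp
        simp only [Finset.mem_filter, not_not] at hp
        rw [← hp.2]
    -- diag entries of A' and B' expressed
    have hA'd : ∀ i, A' i i = A i i + t := fun i => by rw [hA' i i, if_pos rfl]
    have hB'd : ∀ i, B' i i = B i i + t := fun i => by rw [hB' i i, if_pos rfl]
    have hA'o : ∀ p : Fin n × Fin n, p.1 ≠ p.2 → A' p.1 p.2 = A p.1 p.2 := by
      intro p hp; rw [hA' p.1 p.2, if_neg hp, add_zero]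
    have hB'o : ∀ p : Fin n × Fin n, p.1 ≠ p.2 → B' p.1 p.2 = B p.1 p.2 := by
      intro p hp; rw [hB' p.1 p.2, if_neg hp, add_zero]
    have hXY : (∑ p : Fin n × Fin n, (A' p.1 p.2) ^ 2) =
        ∑ p : Fin n × Fin n, (B' p.1 p.2) ^ 2 := by
      rw [hsplit A', hsplit B']
      congr 1
      · calc (∑ p ∈ Finset.univ.filter fun p : Fin n × Fin n => p.1 ≠ p.2, (A' p.1 p.2) ^ 2)
            = ∑ p ∈ Finset.univ.filter fun p : Fin n × Fin n => p.1 ≠ p.2, (A p.1 p.2) ^ 2 :=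
              Finset.sum_congr rfl fun p hp => by
                rw [hA'o p (Finset.mem_filter.mp hp).2]
          _ = ∑ p ∈ Finset.univ.filter fun p : Fin n × Fin n => p.1 ≠ p.2, (B p.1 p.2) ^ 2 :=
              hoffsum (fun a => a ^ 2)
          _ = _ := Finset.sum_congr rfl fun p hp => by
                rw [hB'o p (Finset.mem_filter.mp hp).2]
      · calc (∑ i : Fin n, (A' i i) ^ 2) = ∑ i : Fin n, (A i i + t) ^ 2 :=
              Finset.sum_congr rfl fun i _ => by rw [hA'd i]
          _ = ∑ i : Fin n, (B i i + t) ^ 2 := hdiagsum (fun a => (a + t) ^ 2)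
          _ = _ := Finset.sum_congr rfl fun i _ => by rw [hB'd i]
    have hvecsq : ∀ M : Matrix (Fin n) (Fin n) ℝ,
        (∑ p : Fin n × Fin n, (vec n M p) ^ 2) = ∑ p : Fin n × Fin n, (M p.1 p.2) ^ 2 := by
      intro M
      exact Fintype.sum_equiv (Equiv.prodComm _ _) _ _ (fun p => rfl)
    -- each vertex maps x to a vector of the same norm
    have hvnorm : ∀ i ∈ s, (∑ p : Fin n × Fin n, (v i p) ^ 2) = ∑ p, (x p) ^ 2 := by
      intro i hi
      obtain ⟨σ, τ, hzi⟩ := hzs i hi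
      rw [hv]
      simp only [hzi, kron_mulVec σ τ A', hx]
      rw [hvecsq, hvecsq]
      exact Fintype.sum_equiv (Equiv.prodCongr τ σ) _ _ (fun p => rfl)
    -- norm equality between x and y
    have hxsq_eq_ysq : (∑ p : Fin n × Fin n, (y p) ^ 2) = ∑ p, (x p) ^ 2 := by
      rw [hy, hx, hvecsq, hvecsq]
      exact hXY.symm
    have hdot : (∑ i ∈ s, w i * ∑ p, y p * v i p) = ∑ p : Fin n × Fin n, (y p) ^ 2 := by
      calc (∑ i ∈ s, w i * ∑ p, y p * v i p)
          = ∑ i ∈ s, ∑ p : Fin n × Fin n, w i * (y p * v i p) := by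
            exact Finset.sum_congr rfl fun i _ => Finset.mul_sum _ _ _
        _ = ∑ p : Fin n × Fin n, ∑ i ∈ s, w i * (y p * v i p) := Finset.sum_comm
        _ = ∑ p : Fin n × Fin n, y p * ∑ i ∈ s, w i * v i p := by
            refine Finset.sum_congr rfl fun p _ => ?_
            rw [Finset.mul_sum]
            exact Finset.sum_congr rfl fun i _ => by ring
        _ = ∑ p : Fin n × Fin n, (y p) ^ 2 := by
            refine Finset.sum_congr rfl fun p _ => ?_
            rw [hsum p]
            ring
    have hzero : (∑ i ∈ s, w i * ∑ p : Fin n × Fin n, (y p - v i p) ^ 2) = 0 := by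
      have expand : ∀ i ∈ s, (∑ p : Fin n × Fin n, (y p - v i p) ^ 2) =
          2 * (∑ p : Fin n × Fin n, (y p) ^ 2) - 2 * ∑ p : Fin n × Fin n, y p * v i p := by
        intro i hi
        have h2 : (∑ p : Fin n × Fin n, (y p - v i p) ^ 2) =
            (∑ p : Fin n × Fin n, (y p) ^ 2) - (∑ p : Fin n × Fin n, 2 * (y p * v i p)) +
              ∑ p : Fin n × Fin n, (v i p) ^ 2 := by
          rw [← Finset.sum_sub_distrib, ← Finset.sum_add_distrib]
          exact Finset.sum_congr rfl fun p _ => by ring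
        rw [h2, hvnorm i hi, ← hxsq_eq_ysq]
        have h3 : (∑ p : Fin n × Fin n, 2 * (y p * v i p)) =
            2 * ∑ p : Fin n × Fin n, y p * v i p := by rw [Finset.mul_sum]
        rw [h3]
        ring
      calc (∑ i ∈ s, w i * ∑ p : Fin n × Fin n, (y p - v i p) ^ 2)
          = ∑ i ∈ s, (w i * (2 * ∑ p : Fin n × Fin n, (y p) ^ 2) -
              2 * (w i * ∑ p : Fin n × Fin n, y p * v i p)) := by
            refine Finset.sum_congr rfl fun i hi => ?_
            rw [expand i hi]
            ring
        _ = (∑ i ∈ s, w i) * (2 * ∑ p : Fin n × Fin n, (y p) ^ 2) -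
              2 * ∑ i ∈ s, w i * ∑ p : Fin n × Fin n, y p * v i p := by
            rw [Finset.sum_sub_distrib, ← Finset.sum_mul]
            congr 1
            rw [Finset.mul_sum]
        _ = 0 := by
            rw [hw1, hdot]
            ring
    obtain ⟨i₀, hi₀, hwpos⟩ : ∃ i ∈ s, 0 < w i := by
      by_contra hcon
      push_neg at hcon
      have h0 : ∑ i ∈ s, w i = 0 :=
        Finset.sum_eq_zero fun i hi => le_antisymm (hcon i hi) (hw0 i hi)
      rw [hw1] at h0
      norm_num at h0
    have hnonneg : ∀ i ∈ s, 0 ≤ w i * ∑ p : Fin n × Fin n, (y p - v i p) ^ 2 := fun i hi =>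
      mul_nonneg (hw0 i hi) (Finset.sum_nonneg fun p _ => sq_nonneg _)
    have hterm := (Finset.sum_eq_zero_iff_of_nonneg hnonneg).mp hzero i₀ hi₀
    have hQ : (∑ p : Fin n × Fin n, (y p - v i₀ p) ^ 2) = 0 := by
      rcases mul_eq_zero.mp hterm with h | h
      · exact absurd h (ne_of_gt hwpos)
      · exact h
    have hyv : ∀ p, y p = v i₀ p := by
      intro p
      have h := (Finset.sum_eq_zero_iff_of_nonneg
        (fun p _ => sq_nonneg (y p - v i₀ p))).mp hQ p (Finset.mem_univ p)
      have h' : y p - v i₀ p = 0 := by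
        have := sq_eq_zero_iff.mp h
        exact this
      linarith
    obtain ⟨σ, τ, hzi⟩ := hzs i₀ hi₀
    have hBA : ∀ a b, B' a b = A' (τ a) (σ b) := by
      intro a b
      have h := hyv (b, a)
      rw [hy, hv] at h
      simp only [hzi, hx, kron_mulVec] at h
      exact h
    have hτσ : ∀ a, τ a = σ a := by
      intro a
      by_contra hne
      have h := hBA a a
      rw [hB'd a, hA' (τ a) (σ a), if_neg hne, add_zero] at h
      have hmem : B a a ∈ Finset.univ.val.map fun i : Fin n => A i i := by
        rw [h1]
        exact Multiset.mem_map_of_mem _ (Finset.mem_val.mpr (Finset.mem_univ a))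
      obtain ⟨k, -, hk⟩ := Multiset.mem_map.mp hmem
      exact htadm (τ a) (σ a) k hne (by rw [hk]; linarith)
    have hfinal : ∀ a b, B a b = A (σ a) (σ b) := by
      intro a b
      have h := hBA a b
      rw [hτσ a] at h
      rw [hB' a b, hA' (σ a) (σ b)] at h
      simp only [Equiv.apply_eq_iff_eq] at h
      exact add_right_cancel h
    exact ⟨σ, by ext a b; rw [conj_apply]; exact hfinal a b⟩
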